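/- arXiv:math/0508561 — 3 statements merged into one kernel-verified Lean document; each statement's English description precedes it below -/
import Mathlib

section
/- Let f₁, …, f_N be complex-valued functions of one complex variable, each analytic at a point x ∈ ℂ and not identically zero near x, and let mⱼ ∈ ℕ be the vanishing order of fⱼ at x. Define φ(z) = log(Σ_{j=1}^N |fⱼ(z)|²)^{1/2}. Then liminf_{z→x, z≠x} φ(z)/log|z−x| = min_{1≤j≤N} mⱼ. -/
open Filter Topology

/-- For `f₁, …, f_N` analytic at `x ∈ ℂ` with vanishing orders `m₁, …, m_N`
(i.e. `fⱼ(z) = (z-x)^{mⱼ} gⱼ(z)` near `x` with `gⱼ` analytic, `gⱼ(x) ≠ 0`), the Lelong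
number at `x` of `φ(z) = log (∑ⱼ |fⱼ(z)|²)^{1/2}` equals `min_j mⱼ`. -/
theorem liminf_log_sum_sq_one_var_eq_min_order
    {N : ℕ} (hN : 0 < N) (x : ℂ)
    (f : Fin N → ℂ → ℂ) (m : Fin N → ℕ) (g : Fin N → ℂ → ℂ)
    (hf : ∀ j, AnalyticAt ℂ (f j) x)
    (hg : ∀ j, AnalyticAt ℂ (g j) x) (hg0 : ∀ j, g j x ≠ 0)
    (hfg : ∀ j, ∀ᶠ z in 𝓝 x, f j z = (z - x) ^ m j * g j z) :
    Filter.liminf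
      (fun z => Real.log (Real.sqrt (∑ j, ‖f j z‖ ^ 2)) / Real.log ‖z - x‖)
      (𝓝[≠] x) = ⨅ j, (m j : ℝ) := by
  have hNE : Nonempty (Fin N) := ⟨⟨0, hN⟩⟩
  obtain ⟨j0, hj0⟩ := Finite.exists_min m
  set μ := m j0 with hμ
  have hinf : (⨅ j, (m j : ℝ)) = (μ : ℝ) := by
    apply le_antisymm
    · exact ciInf_le (Finite.bddBelow_range _) j0
    · exact le_ciInf fun j => by exact_mod_cast hj0 j
  rw [hinf]
  set h : ℂ → ℝ := fun z => ∑ j, ‖z - x‖ ^ (2 * (m j - μ)) * ‖g j z‖ ^ 2 with hh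
  have hcont : ContinuousAt h x := by
    apply tendsto_finset_sum
    intro j _
    exact (((continuous_norm.comp (continuous_id.sub continuous_const)).pow _).continuousAt).mul
      (((hg j).continuousAt.norm).pow 2)
  have hhx : 0 < h x := by
    have hterm : (0:ℝ) < ‖x - x‖ ^ (2 * (m j0 - μ)) * ‖g j0 x‖ ^ 2 := by
      simp [hμ, pow_pos, norm_pos_iff, hg0 j0]
    calc (0:ℝ) < ‖x - x‖ ^ (2 * (m j0 - μ)) * ‖g j0 x‖ ^ 2 := hterm
      _ ≤ h x := Finset.single_le_sum (f := fun j => ‖x - x‖ ^ (2 * (m j - μ)) * ‖g j x‖ ^ 2)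
        (fun j _ => by positivity) (Finset.mem_univ j0)
  -- eventual equality
  have hev : ∀ᶠ z in 𝓝[≠] x,
      Real.log (Real.sqrt (∑ j, ‖f j z‖ ^ 2)) / Real.log ‖z - x‖
        = (μ : ℝ) + Real.log (h z) / 2 * (Real.log ‖z - x‖)⁻¹ := by
    have h1 : ∀ᶠ z in 𝓝 x, ∀ j, f j z = (z - x) ^ m j * g j z :=
      Filter.eventually_all.mpr hfg
    have h2 : ∀ᶠ z in 𝓝 x, 0 < h z := hcont.eventually (eventually_gt_nhds hhx)
    have h3 : ∀ᶠ z in 𝓝 x, ‖z - x‖ < 1 := by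
      have : ContinuousAt (fun z : ℂ => ‖z - x‖) x :=
        (continuous_norm.comp (continuous_id.sub continuous_const)).continuousAt
      simpa using this.eventually_lt continuousAt_const (by simp)
    filter_upwards [nhdsWithin_le_nhds h1, nhdsWithin_le_nhds h2,
      nhdsWithin_le_nhds h3, self_mem_nhdsWithin] with z hz1 hz2 hz3 hz4
    have hzx : z - x ≠ 0 := sub_ne_zero.mpr hz4
    have hnz : (0:ℝ) < ‖z - x‖ := by simpa [norm_pos_iff] using hzx
    have hL : Real.log ‖z - x‖ ≠ 0 := by
      exact ne_of_lt (Real.log_neg hnz hz3)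
    have hsum : (∑ j, ‖f j z‖ ^ 2) = ‖z - x‖ ^ (2 * μ) * h z := by
      rw [hh, Finset.mul_sum]
      refine Finset.sum_congr rfl fun j _ => ?_
      rw [hz1 j]
      have hle := hj0 j
      have : 2 * m j = 2 * μ + 2 * (m j - μ) := by omega
      rw [norm_mul, norm_pow, mul_pow, ← pow_mul, mul_comm (m j) 2, this, pow_add]
      ring
    have hsqrt : Real.sqrt (∑ j, ‖f j z‖ ^ 2) = ‖z - x‖ ^ μ * Real.sqrt (h z) := by
      rw [hsum, Real.sqrt_mul (by positivity), mul_comm 2 μ, pow_mul,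
        Real.sqrt_sq (by positivity)]
    rw [hsqrt, Real.log_mul (by positivity) (Real.sqrt_ne_zero'.mpr hz2),
      Real.log_pow, Real.log_sqrt hz2.le]
    rw [add_div, mul_div_assoc, div_self hL, mul_one, div_eq_mul_inv, div_eq_mul_inv]
  rw [Filter.liminf_congr hev]
  have hL : Tendsto (fun z : ℂ => Real.log ‖z - x‖) (𝓝[≠] x) atBot :=
    Real.tendsto_log_nhdsGT_zero.comp (tendsto_norm_sub_self_nhdsNE x)
  have hLinv : Tendsto (fun z : ℂ => (Real.log ‖z - x‖)⁻¹) (𝓝[≠] x) (𝓝 0) := by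
    have : Tendsto (fun z : ℂ => -Real.log ‖z - x‖) (𝓝[≠] x) atTop :=
      tendsto_neg_atTop_iff.mpr hL
    have := this.inv_tendsto_atTop
    have heq : (fun z : ℂ => (-Real.log ‖z - x‖)⁻¹) = fun z : ℂ => -(Real.log ‖z - x‖)⁻¹ := by
      funext z; rw [inv_neg]
    rw [Pi.inv_def] at this
    simp only [heq] at this
    simpa using this.neg
  have hlogh : Tendsto (fun z : ℂ => Real.log (h z) / 2) (𝓝[≠] x) (𝓝 (Real.log (h x) / 2)) :=
    (((Real.continuousAt_log hhx.ne').comp hcont).div_const 2).continuousWithinAt.tendsto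
  have htend : Tendsto (fun z : ℂ => (μ : ℝ) + Real.log (h z) / 2 * (Real.log ‖z - x‖)⁻¹)
      (𝓝[≠] x) (𝓝 ((μ : ℝ) + Real.log (h x) / 2 * 0)) :=
    tendsto_const_nhds.add (hlogh.mul hLinv)
  rw [mul_zero, add_zero] at htend
  exact htend.liminf_eq
end

section
/- Let Ω ⊆ ℂⁿ be an open set, x ∈ Ω, and let f₁, …, f_N : Ω → ℂ be holomorphic functions such that for each j the function fⱼ vanishes to order exactly mⱼ ∈ ℕ at x. Define φ(z) = log(Σ_{j=1}^N |fⱼ(z)|²)^{1/2}. Then liminf_{z→x, z≠x} φ(z)/log‖z−x‖ ≤ min_{1≤j≤N} mⱼ. -/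
open Filter Topology


lemma iteratedFDeriv_eq_zero_of_series {E : Type} [NormedAddCommGroup E] [NormedSpace ℂ E] :
    ∀ (m : ℕ) {F : Type} [NormedAddCommGroup F] [NormedSpace ℂ F] [CompleteSpace F]
      {f : E → F} {p : FormalMultilinearSeries ℂ E F} {x : E} {r : ENNReal},
      HasFPowerSeriesOnBall f p x r → (∀ k ≤ m, p k = 0) → iteratedFDeriv ℂ m f x = 0 := by
  intro m
  induction m with
  | zero =>
    intro F _ _ _ f p x r h hp
    rw [h.iteratedFDeriv_zero_apply_diag, hp 0 le_rfl]
  | succ m ih =>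
    intro F _ _ _ f p x r h hp
    have hd : ∀ k ≤ m, p.derivSeries k = 0 := by
      intro k hk
      have hz : p (1 + k) = 0 := by
        rw [add_comm]
        exact hp (k+1) (by omega)
      ext v y
      simp [FormalMultilinearSeries.derivSeries,
        ContinuousLinearMap.compFormalMultilinearSeries,
        FormalMultilinearSeries.changeOriginSeries,
        FormalMultilinearSeries.changeOriginSeriesTerm, hz]
    have hfd : iteratedFDeriv ℂ m (fderiv ℂ f) x = 0 := ih h.fderiv hd
    ext v
    rw [iteratedFDeriv_succ_apply_right, hfd]
    simp

/-- From the exact vanishing order hypothesis, find a unit direction in which the `m`-th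
diagonal coefficient of the power series is nonzero. -/
lemma exists_unit_dir {E : Type} [NormedAddCommGroup E] [NormedSpace ℂ E]
    {f : E → ℂ} {p : FormalMultilinearSeries ℂ E ℂ} {x : E} {r : ENNReal} {m : ℕ}
    (h : HasFPowerSeriesOnBall f p x r)
    (hlow : ∀ k < m, iteratedFDeriv ℂ k f x = 0)
    (hne : iteratedFDeriv ℂ m f x ≠ 0)
    (e : E) (he : ‖e‖ = 1) :
    ∃ v : E, ‖v‖ = 1 ∧ p m (fun _ => v) ≠ 0 := by
  -- low diagonal coefficients vanish
  have hdiaglow : ∀ k < m, ∀ y : E, p k (fun _ => y) = 0 := by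
    intro k hk y
    have h1 : k.factorial • p k (fun _ => y) = iteratedFDeriv ℂ k f x (fun _ => y) :=
      h.factorial_smul y k
    rw [hlow k hk] at h1
    have h2 : ((k.factorial : ℂ)) • p k (fun _ => y) = 0 := by
      rw [Nat.cast_smul_eq_nsmul]; simpa using h1
    rcases smul_eq_zero.1 h2 with h3 | h3
    · exact absurd h3 (by exact_mod_cast Nat.factorial_ne_zero k)
    · exact h3
  by_contra hcon
  push_neg at hcon
  -- then all diagonal coefficients up to m vanish
  have hdiagm : ∀ y : E, p m (fun _ => y) = 0 := by
    intro y
    by_cases hy : y = 0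
    · subst hy
      rcases Nat.eq_zero_or_pos m with hm | hm
      · subst hm
        have h0 := hcon e he
        have : p 0 (fun _ => (0:E)) = p 0 (fun _ => e) :=
          congrArg (p 0) (Subsingleton.elim _ _)
        rw [this, h0]
      · have : (fun _ : Fin m => (0 : E)) = Function.update (fun _ : Fin m => (0:E)) ⟨0, hm⟩ 0 := by
          funext i; simp
        rw [this]
        exact (p m).map_update_zero _ _
    · have hyn : (0 : ℝ) < ‖y‖ := norm_pos_iff.2 hy
      set c : ℂ := (‖y‖ : ℂ) with hc
      have hcne : c ≠ 0 := by
        simp only [hc, ne_eq, Complex.ofReal_eq_zero]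
        exact ne_of_gt hyn
      set u : E := c⁻¹ • y with hu
      have hun : ‖u‖ = 1 := by
        rw [hu, norm_smul]
        simp [hc, abs_of_pos hyn]
        field_simp
      have hyu : y = c • u := by
        rw [hu, smul_smul, mul_inv_cancel₀ hcne, one_smul]
      have := hcon u hun
      rw [hyu]
      have : p m (fun _ : Fin m => c • u) = (∏ _i : Fin m, c) • p m (fun _ => u) := by
        rw [← ContinuousMultilinearMap.map_smul_univ]
      rw [this, hcon u hun, smul_zero]
  -- modified series
  set q : FormalMultilinearSeries ℂ E ℂ := fun k => if k ≤ m then 0 else p k with hq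
  have hq0 : ∀ k ≤ m, q k = 0 := fun k hk => by simp [hq, hk]
  have hqball : HasFPowerSeriesOnBall f q x r := by
    refine ⟨le_trans h.r_le (FormalMultilinearSeries.radius_le_of_le fun k => ?_),
      h.r_pos, fun {y} hy => ?_⟩
    · by_cases hk : k ≤ m <;> simp [hq, hk]
    · have heq : ∀ k, q k (fun _ => y) = p k (fun _ => y) := by
        intro k
        by_cases hk : k ≤ m
        · rcases lt_or_eq_of_le hk with hk' | hk'
          · simp [hq, hk, hdiaglow k hk' y]
          · subst hk'
            simp [hq, hdiagm y]
        · simp [hq, hk]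
      simpa only [heq] using h.hasSum hy
  exact hne (iteratedFDeriv_eq_zero_of_series m hqball hq0)


lemma curve_limit {E : Type} [NormedAddCommGroup E] [NormedSpace ℂ E]
    {f : E → ℂ} {p : FormalMultilinearSeries ℂ E ℂ} {x : E} {r : ENNReal} {m : ℕ}
    (h : HasFPowerSeriesOnBall f p x r) (v : E) (hv : ‖v‖ = 1)
    (hm : p m (fun _ => v) ≠ 0) :
    ∃ k : ℕ, k ≤ m ∧
      Filter.Tendsto (fun t : ℂ => Real.log ‖f (x + t • v)‖ / Real.log ‖t‖)
        (𝓝[≠] (0:ℂ)) (𝓝 (k : ℝ)) ∧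
      ∀ᶠ t in 𝓝[≠] (0:ℂ), f (x + t • v) ≠ 0 := by
  set L : ℂ →L[ℂ] E := ContinuousLinearMap.toSpanSingleton ℂ v with hL
  have hLnorm : ‖L‖ = 1 := by rw [hL, ContinuousLinearMap.norm_toSpanSingleton, hv]
  set g : ℂ → ℂ := fun t => f (x + t • v) with hg
  set q : FormalMultilinearSeries ℂ ℂ ℂ := p.compContinuousLinearMap L with hqdef
  have hqball : HasFPowerSeriesOnBall g q 0 r := by
    refine ⟨le_trans h.r_le (FormalMultilinearSeries.radius_le_of_le fun k => ?_), h.r_pos,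
      fun {t} ht => ?_⟩
    · calc ‖q k‖ ≤ ‖p k‖ * ∏ _i : Fin k, ‖L‖ :=
            ContinuousMultilinearMap.norm_compContinuousLinearMap_le _ _
        _ = ‖p k‖ := by simp [hLnorm]
    · have hv1 : ‖v‖₊ = 1 := by
        rw [← NNReal.coe_inj]; simpa using hv
      have htv : t • v ∈ Metric.eball (0 : E) r := by
        rw [Metric.mem_eball, edist_zero_right] at ht ⊢
        rw [enorm_smul, enorm_eq_nnnorm v, hv1, ENNReal.coe_one, mul_one]
        exact ht
      have := h.hasSum htv
      have heq : ∀ k, q k (fun _ => t) = p k (fun _ => t • v) := by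
        intro k
        rw [hqdef, FormalMultilinearSeries.compContinuousLinearMap_apply]
        congr 1
      simp only [heq, hg]
      simpa using this
  have hqat : HasFPowerSeriesAt g q 0 := ⟨r, hqball⟩
  have hqm : q m ≠ 0 := by
    intro hz
    apply hm
    have : q m (fun _ => (1:ℂ)) = p m (fun _ => v) := by
      rw [hqdef, FormalMultilinearSeries.compContinuousLinearMap_apply]
      congr 1
      funext i
      simp [hL, ContinuousLinearMap.toSpanSingleton_apply]
    rw [← this, hz]
    simp
  have hqne : q ≠ 0 := fun hz => hqm (by rw [hz]; rfl)
  set k := q.order with hk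
  have hkm : k ≤ m := Nat.sInf_le hqm
  set hfun : ℂ → ℂ := (Function.swap dslope 0)^[k] g with hhfun
  have hh0 : hfun 0 ≠ 0 := hqat.iterate_dslope_fslope_ne_zero hqne
  have hhan : AnalyticAt ℂ hfun 0 := ⟨_, hqat.has_fpower_series_iterate_dslope_fslope k⟩
  have hrep : ∀ᶠ t in 𝓝 (0:ℂ), g t = t ^ k • hfun t := by
    filter_upwards [Filter.Eventually.of_forall hqat.eq_pow_order_mul_iterate_dslope] with t ht
    simpa using ht
  have hhcont : ContinuousAt hfun 0 := hhan.continuousAt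
  -- eventual positivity of ‖hfun t‖
  have hpos : ∀ᶠ t in 𝓝 (0:ℂ), hfun t ≠ 0 :=
    hhcont.eventually_ne hh0
  refine ⟨k, hkm, ?_, ?_⟩
  · -- tendsto
    have htail : Filter.Tendsto (fun t : ℂ => Real.log ‖hfun t‖ * (Real.log ‖t‖)⁻¹)
        (𝓝[≠] (0:ℂ)) (𝓝 0) := by
      have h1 : Filter.Tendsto (fun t : ℂ => Real.log ‖hfun t‖) (𝓝[≠] (0:ℂ))
          (𝓝 (Real.log ‖hfun 0‖)) := by
        apply Filter.Tendsto.mono_left _ nhdsWithin_le_nhds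
        exact (Real.continuousAt_log (by simpa using hh0)).tendsto.comp
          (hhcont.norm.tendsto)
      have h2 : Filter.Tendsto (fun t : ℂ => (Real.log ‖t‖)⁻¹) (𝓝[≠] (0:ℂ)) (𝓝 0) := by
        have hlogbot : Filter.Tendsto (fun t : ℂ => Real.log ‖t‖) (𝓝[≠] (0:ℂ)) atBot := by
          apply Real.tendsto_log_nhdsGT_zero.comp
          rw [tendsto_nhdsWithin_iff]
          constructor
          · exact tendsto_nhdsWithin_of_tendsto_nhds (by simpa using continuous_norm.tendsto (0:ℂ))
          · filter_upwards [self_mem_nhdsWithin] with t ht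
            simpa using ht
        have := (tendsto_neg_atTop_iff.2 hlogbot).inv_tendsto_atTop
        have h3 : Filter.Tendsto (fun t : ℂ => -(-Real.log ‖t‖)⁻¹) (𝓝[≠] (0:ℂ)) (𝓝 (-0)) :=
          this.neg
        simpa only [inv_neg, neg_neg, neg_zero] using h3
      simpa using h1.mul h2
    have hmain : Filter.Tendsto (fun t : ℂ => (k:ℝ) + Real.log ‖hfun t‖ * (Real.log ‖t‖)⁻¹)
        (𝓝[≠] (0:ℂ)) (𝓝 ((k:ℝ) + 0)) := tendsto_const_nhds.add htail
    rw [add_zero] at hmain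
    apply hmain.congr'
    -- eventual equality
    have hsmall : ∀ᶠ t in 𝓝[≠] (0:ℂ), ‖t‖ < 1 := by
      apply nhdsWithin_le_nhds
      filter_upwards [Metric.ball_mem_nhds (0:ℂ) one_pos] with t ht
      simpa [dist_eq_norm] using ht
    filter_upwards [eventually_nhdsWithin_of_eventually_nhds hrep,
      eventually_nhdsWithin_of_eventually_nhds hpos, hsmall, self_mem_nhdsWithin]
      with t hrept hpost hsmallt htne
    have htne' : t ≠ 0 := htne
    have htnorm : (0:ℝ) < ‖t‖ := norm_pos_iff.2 htne'
    have hlogneg : Real.log ‖t‖ < 0 := Real.log_neg htnorm hsmallt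
    have : ‖g t‖ = ‖t‖ ^ k * ‖hfun t‖ := by
      rw [hrept, norm_smul, norm_pow]
    show (k:ℝ) + Real.log ‖hfun t‖ * (Real.log ‖t‖)⁻¹ = Real.log ‖g t‖ / Real.log ‖t‖
    rw [this, Real.log_mul (pow_ne_zero k htnorm.ne') (by simpa using hpost), Real.log_pow,
      add_div, mul_div_assoc, div_self hlogneg.ne, mul_one, div_eq_mul_inv]
  · -- eventual nonvanishing
    filter_upwards [eventually_nhdsWithin_of_eventually_nhds hrep,
      eventually_nhdsWithin_of_eventually_nhds hpos, self_mem_nhdsWithin]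
      with t hrept hpost htne
    show g t ≠ 0
    rw [hrept]
    exact smul_ne_zero (pow_ne_zero _ htne) hpost

/-- Upper bound for the Lelong number: for holomorphic `f₁, …, f_N` on an open `Ω ⊆ ℂⁿ`
vanishing to order exactly `mⱼ` at `x ∈ Ω`, the Lelong number at `x` of
`φ(z) = log (∑ⱼ |fⱼ(z)|²)^{1/2}` is at most `min_j mⱼ`. -/
theorem lelong_number_le_min_order
    {n N : ℕ} (hN : 0 < N)
    (Ω : Set (EuclideanSpace ℂ (Fin n))) (hΩ : IsOpen Ω)
    (x : EuclideanSpace ℂ (Fin n)) (hx : x ∈ Ω)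
    (f : Fin N → EuclideanSpace ℂ (Fin n) → ℂ) (m : Fin N → ℕ)
    (hf : ∀ j, AnalyticOnNhd ℂ (f j) Ω)
    (hord : ∀ j, (∀ k < m j, iteratedFDeriv ℂ k (f j) x = 0) ∧
      iteratedFDeriv ℂ (m j) (f j) x ≠ 0) :
    Filter.liminf
      (fun z => Real.log (Real.sqrt (∑ j, ‖f j z‖ ^ 2)) / Real.log ‖z - x‖)
      (𝓝[≠] x) ≤ ⨅ j, (m j : ℝ) := by
  have hNE : Nonempty (Fin N) := ⟨⟨0, hN⟩⟩
  rcases Nat.eq_zero_or_pos n with hn | hn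
  · -- trivial case: the space is a point
    subst hn
    have hbot : (𝓝[≠] x) = ⊥ := by
      have hempty : ({x}ᶜ : Set (EuclideanSpace ℂ (Fin 0))) = ∅ := by
        ext z
        simp [Subsingleton.elim z x]
      rw [show (𝓝[≠] x) = 𝓝[({x}ᶜ : Set (EuclideanSpace ℂ (Fin 0)))] x from rfl, hempty,
        nhdsWithin_empty]
    rw [hbot, Filter.liminf_eq]
    simp only [Filter.eventually_bot]
    have huniv : {a : ℝ | True} = Set.univ := rfl
    rw [huniv, Real.sSup_univ]
    exact le_ciInf fun j => by positivity
  set u : EuclideanSpace ℂ (Fin n) → ℝ :=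
    fun z => Real.log (Real.sqrt (∑ j, ‖f j z‖ ^ 2)) / Real.log ‖z - x‖ with hu
  -- boundedness below of u near x
  have hconts : ContinuousAt (fun z => ∑ j, ‖f j z‖ ^ 2) x :=
    tendsto_finset_sum _ fun j _ => ((hf j x hx).continuousAt.norm).pow 2
  set S : ℝ := ∑ j, ‖f j x‖ ^ 2 with hS
  have hSnn : 0 ≤ S := Finset.sum_nonneg fun j _ => by positivity
  set A : ℝ := max 0 (Real.log (Real.sqrt (S + 1))) with hA
  have hAnn : 0 ≤ A := le_max_left _ _
  have hub : ∀ᶠ z in 𝓝[≠] x, (∑ j, ‖f j z‖ ^ 2) ≤ S + 1 := by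
    apply nhdsWithin_le_nhds
    exact hconts.eventually_le_const (by linarith)
  have hlog1 : ∀ᶠ z in 𝓝[≠] x, Real.log ‖z - x‖ ≤ -1 := by
    have hball : ∀ᶠ z in 𝓝[≠] x, ‖z - x‖ ≤ Real.exp (-1) := by
      apply nhdsWithin_le_nhds
      filter_upwards [Metric.ball_mem_nhds x (Real.exp_pos (-1))] with z hz
      simp only [Metric.mem_ball, dist_eq_norm] at hz
      exact hz.le
    filter_upwards [hball, self_mem_nhdsWithin] with z hz hzne
    have hzx : z ≠ x := hzne
    have hpos : (0:ℝ) < ‖z - x‖ := by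
      rw [norm_pos_iff, sub_ne_zero]; exact hzx
    calc Real.log ‖z - x‖ ≤ Real.log (Real.exp (-1)) := Real.log_le_log hpos hz
      _ = -1 := Real.log_exp _
  have hlb : ∀ᶠ z in 𝓝[≠] x, -A ≤ u z := by
    filter_upwards [hub, hlog1] with z h1 h2
    have hphi : Real.log (Real.sqrt (∑ j, ‖f j z‖ ^ 2)) ≤ A := by
      by_cases hle : Real.sqrt (∑ j, ‖f j z‖ ^ 2) ≤ 1
      · exact le_trans (Real.log_nonpos (Real.sqrt_nonneg _) hle) hAnn
      · push_neg at hle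
        have h3 : Real.sqrt (∑ j, ‖f j z‖ ^ 2) ≤ Real.sqrt (S + 1) :=
          Real.sqrt_le_sqrt h1
        calc Real.log (Real.sqrt (∑ j, ‖f j z‖ ^ 2)) ≤ Real.log (Real.sqrt (S + 1)) :=
              Real.log_le_log (by linarith) h3
          _ ≤ A := le_max_right _ _
    have hc : Real.log ‖z - x‖ < 0 := by linarith
    rw [hu]
    rw [le_div_iff_of_neg hc]
    nlinarith [mul_nonneg hAnn (by linarith : (0:ℝ) ≤ -1 - Real.log ‖z - x‖)]
  have hbdd : Filter.IsBoundedUnder (· ≥ ·) (𝓝[≠] x) u :=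
    ⟨-A, by simpa [Filter.eventually_map] using hlb⟩
  -- main bound for each j
  refine le_ciInf fun j => ?_
  have hAx : AnalyticAt ℂ (f j) x := hf j x hx
  obtain ⟨p, hpat⟩ := hAx
  obtain ⟨r, hpball⟩ := hpat
  set e : EuclideanSpace ℂ (Fin n) := EuclideanSpace.single ⟨0, hn⟩ 1 with he
  have henorm : ‖e‖ = 1 := by
    rw [he, EuclideanSpace.norm_single]
    simp
  obtain ⟨v, hv1, hvne⟩ := exists_unit_dir hpball (hord j).1 (hord j).2 e henorm
  obtain ⟨k, hkm, htend, hne0⟩ := curve_limit hpball v hv1 hvne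
  have hvnz : v ≠ 0 := by
    intro hz
    rw [hz] at hv1
    simp at hv1
  -- the curve map
  set ψ : ℂ → EuclideanSpace ℂ (Fin n) := fun t => x + t • v with hψ
  have hψtend : Filter.Tendsto ψ (𝓝[≠] (0:ℂ)) (𝓝[≠] x) := by
    rw [tendsto_nhdsWithin_iff]
    constructor
    · apply tendsto_nhdsWithin_of_tendsto_nhds
      have : Filter.Tendsto ψ (𝓝 0) (𝓝 (x + (0:ℂ) • v)) := by
        apply Filter.Tendsto.const_add
        exact (continuous_id.smul continuous_const).tendsto 0
      simpa using this
    · filter_upwards [self_mem_nhdsWithin] with t ht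
      have htne : t ≠ 0 := ht
      simp only [Set.mem_compl_iff, Set.mem_singleton_iff, hψ]
      intro hcon
      apply htne
      have : t • v = 0 := by
        have := congrArg (fun w => w - x) hcon
        simpa using this
      rcases smul_eq_zero.1 this with h | h
      · exact h
      · exact absurd h hvnz
  -- suffices: liminf ≤ m j + ε
  have key : ∀ ε : ℝ, 0 < ε → Filter.liminf u (𝓝[≠] x) ≤ (m j : ℝ) + ε := by
    intro ε hε
    apply Filter.liminf_le_of_frequently_le _ hbdd
    -- frequently u z ≤ m j + ε
    have heva : ∀ᶠ t in 𝓝[≠] (0:ℂ),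
        Real.log ‖f j (x + t • v)‖ / Real.log ‖t‖ ≤ (k:ℝ) + ε :=
      htend.eventually_le_const (by linarith)
    have hsmall : ∀ᶠ t in 𝓝[≠] (0:ℂ), ‖t‖ < 1 := by
      apply nhdsWithin_le_nhds
      filter_upwards [Metric.ball_mem_nhds (0:ℂ) one_pos] with t ht
      simpa [dist_eq_norm] using ht
    have hev : ∀ᶠ t in 𝓝[≠] (0:ℂ), u (ψ t) ≤ (m j : ℝ) + ε := by
      filter_upwards [heva, hne0, hsmall, self_mem_nhdsWithin] with t h1 h2 h3 h4
      have htne : t ≠ 0 := h4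
      have htpos : (0:ℝ) < ‖t‖ := norm_pos_iff.2 htne
      have hlneg : Real.log ‖t‖ < 0 := Real.log_neg htpos h3
      have hnormeq : ‖ψ t - x‖ = ‖t‖ := by
        rw [hψ]
        simp [norm_smul, hv1]
      have hfle : ‖f j (ψ t)‖ ≤ Real.sqrt (∑ i, ‖f i (ψ t)‖ ^ 2) := by
        rw [show ‖f j (ψ t)‖ = Real.sqrt (‖f j (ψ t)‖ ^ 2) by
          rw [Real.sqrt_sq (norm_nonneg _)]]
        apply Real.sqrt_le_sqrt
        exact Finset.single_le_sum (f := fun i => ‖f i (ψ t)‖ ^ 2)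
          (fun i _ => by positivity) (Finset.mem_univ j)
      have hfpos : (0:ℝ) < ‖f j (ψ t)‖ := norm_pos_iff.2 h2
      have hlogle : Real.log ‖f j (ψ t)‖ ≤ Real.log (Real.sqrt (∑ i, ‖f i (ψ t)‖ ^ 2)) :=
        Real.log_le_log hfpos hfle
      have hdivle : u (ψ t) ≤ Real.log ‖f j (ψ t)‖ / Real.log ‖t‖ := by
        rw [hu]
        simp only [hnormeq]
        exact div_le_div_of_nonpos_of_le hlneg.le hlogle
      calc u (ψ t) ≤ Real.log ‖f j (ψ t)‖ / Real.log ‖t‖ := hdivle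
        _ ≤ (k:ℝ) + ε := h1
        _ ≤ (m j : ℝ) + ε := by
            have : (k:ℝ) ≤ (m j : ℝ) := by exact_mod_cast hkm
            linarith
    exact (hψtend.frequently hev.frequently)
  exact le_of_forall_pos_le_add key
end

section
/- Let x ∈ ℂⁿ, let s ≥ 1 be an integer, and let f₁, …, f_n be holomorphic functions defined on a neighborhood of x such that for each i = 1, …, n the function z ↦ fᵢ(z) − (zᵢ − xᵢ)^s vanishes to order at least s+1 at x (i.e., the s-jet of fᵢ at x is the monomial (zᵢ − xᵢ)^s). Then x is an isolated point of the common zero set {z : f₁(z) = ⋯ = f_n(z) = 0}; that is, there is a neighborhood U of x such that x is the only common zero of f₁, …, f_n in U. -/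
open Filter Topology

/-- If `f₁, …, f_n` are holomorphic near `x ∈ ℂⁿ` and the `s`-jet of `fᵢ` at `x` is the
monomial `(zᵢ - xᵢ)^s` (i.e. `fᵢ(z) - (zᵢ - xᵢ)^s` vanishes to order at least `s+1` at
`x`), then `x` is an isolated point of the common zero set of `f₁, …, f_n`. -/
theorem isolated_common_zero_of_jets
    {n : ℕ} (Ω : Set (EuclideanSpace ℂ (Fin n))) (hΩ : IsOpen Ω)
    (x : EuclideanSpace ℂ (Fin n)) (hx : x ∈ Ω)
    (s : ℕ) (hs : 1 ≤ s)
    (f : Fin n → EuclideanSpace ℂ (Fin n) → ℂ)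
    (hf : ∀ i, AnalyticOnNhd ℂ (f i) Ω)
    (hjet : ∀ i, ∀ k < s + 1,
      iteratedFDeriv ℂ k (fun z => f i z - (z i - x i) ^ s) x = 0) :
    ∃ U ∈ 𝓝 x, ∀ z ∈ U, (∀ i, f i z = 0) → z = x := by
  rcases Nat.eq_zero_or_pos n with hn | hn
  · exact ⟨Set.univ, Filter.univ_mem, fun z _ _ => PiLp.ext fun i => absurd i.2 (by omega)⟩
  -- Step 1: big-O estimate for each i
  have key : ∀ i, (fun y : EuclideanSpace ℂ (Fin n) => f i (x + y) - (y i) ^ s)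
      =O[𝓝 0] fun y => ‖y‖ ^ (s + 1) := by
    intro i
    have hga : AnalyticAt ℂ (fun z : EuclideanSpace ℂ (Fin n) => f i z - (z i - x i) ^ s) x := by
      apply (hf i x hx).sub
      have h0 : AnalyticAt ℂ (fun z : EuclideanSpace ℂ (Fin n) => z i) x :=
        (EuclideanSpace.proj i : EuclideanSpace ℂ (Fin n) →L[ℂ] ℂ).analyticAt x
      exact (h0.sub analyticAt_const).pow s
    obtain ⟨p, r, hp⟩ := hga
    have hcoef : ∀ k < s + 1, ∀ y : EuclideanSpace ℂ (Fin n), p k (fun _ => y) = 0 := by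
      intro k hk y
      have h1 := hp.factorial_smul y k
      rw [hjet i k hk] at h1
      simp only [ContinuousMultilinearMap.zero_apply, smul_eq_zero] at h1
      rcases h1 with h1 | h1
      · exact absurd h1 (Nat.factorial_ne_zero k)
      · exact h1
    have hps : ∀ y : EuclideanSpace ℂ (Fin n), p.partialSum (s + 1) y = 0 := fun y =>
      Finset.sum_eq_zero fun k hk => hcoef k (Finset.mem_range.mp hk) y
    have h2 := hp.hasFPowerSeriesAt.isBigO_sub_partialSum_pow (s + 1)
    have heq : (fun y : EuclideanSpace ℂ (Fin n) =>
        (fun z : EuclideanSpace ℂ (Fin n) => f i z - (z i - x i) ^ s) (x + y)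
          - p.partialSum (s + 1) y)
        = fun y : EuclideanSpace ℂ (Fin n) => f i (x + y) - (y i) ^ s := by
      funext y
      simp [hps, PiLp.add_apply, add_sub_cancel_left]
    rwa [heq] at h2
  -- Step 2: uniform constant
  choose C hC using fun i => (key i).bound
  set B : ℝ := ∑ i : Fin n, |C i| with hBdef
  have hB : 0 ≤ B := Finset.sum_nonneg fun i _ => abs_nonneg _
  have hE : ∀ᶠ y : EuclideanSpace ℂ (Fin n) in 𝓝 0,
      ∀ i, ‖f i (x + y) - (y i) ^ s‖ ≤ B * ‖y‖ ^ (s + 1) := by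
    rw [eventually_all]
    intro i
    filter_upwards [hC i] with y hy
    have h1 : ‖(‖y‖ ^ (s + 1) : ℝ)‖ = ‖y‖ ^ (s + 1) := by
      simp [abs_of_nonneg (pow_nonneg (norm_nonneg y) _)]
    rw [h1] at hy
    refine hy.trans (mul_le_mul_of_nonneg_right ?_ (pow_nonneg (norm_nonneg y) _))
    exact le_trans (le_abs_self _)
      (Finset.single_le_sum (f := fun i => |C i|) (fun j _ => abs_nonneg _) (Finset.mem_univ i))
  obtain ⟨δ, hδ, hball⟩ := Metric.eventually_nhds_iff.mp hE
  -- Step 3: choose the radius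
  set A : ℝ := (n : ℝ) ^ s * B ^ 2 with hAdef
  have hA : 0 ≤ A := mul_nonneg (pow_nonneg (Nat.cast_nonneg n) _) (sq_nonneg _)
  set ε : ℝ := min δ (min 1 (A + 1)⁻¹) with hεdef
  have hε : 0 < ε := lt_min hδ (lt_min one_pos (by positivity))
  refine ⟨Metric.ball x ε, Metric.ball_mem_nhds x hε, fun z hz hfz => ?_⟩
  set y : EuclideanSpace ℂ (Fin n) := z - x with hydef
  have hzy : x + y = z := by rw [hydef]; abel
  have hynorm : ‖y‖ < ε := by
    rw [hydef, ← dist_eq_norm]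
    exact Metric.mem_ball.mp hz
  have hbound : ∀ i, ‖y i‖ ^ s ≤ B * ‖y‖ ^ (s + 1) := by
    intro i
    have := hball (y := y) (by simpa using hynorm.trans_le (min_le_left _ _)) i
    rw [hzy, hfz i, zero_sub, norm_neg, norm_pow] at this
    exact this
  -- pick a maximal coordinate
  have : Nonempty (Fin n) := ⟨⟨0, hn⟩⟩
  obtain ⟨j, -, hj⟩ := Finset.exists_max_image Finset.univ (fun i => ‖y i‖) Finset.univ_nonempty
  have hsum : ‖y‖ ^ 2 ≤ (n : ℝ) * ‖y j‖ ^ 2 := by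
    have h1 : ‖y‖ = Real.sqrt (∑ i : Fin n, ‖y i‖ ^ 2) := EuclideanSpace.norm_eq y
    have h2 : ∑ i : Fin n, ‖y i‖ ^ 2 ≤ (n : ℝ) * ‖y j‖ ^ 2 := by
      calc ∑ i : Fin n, ‖y i‖ ^ 2 ≤ ∑ _i : Fin n, ‖y j‖ ^ 2 :=
            Finset.sum_le_sum fun i _ =>
              pow_le_pow_left₀ (norm_nonneg _) (hj i (Finset.mem_univ i)) 2
        _ = (n : ℝ) * ‖y j‖ ^ 2 := by simp [mul_comm]
    rw [h1, Real.sq_sqrt (Finset.sum_nonneg fun i _ => sq_nonneg _)]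
    exact h2
  -- main inequality
  have hmain : ‖y‖ ^ (2 * s) ≤ A * ‖y‖ ^ (2 * s + 2) := by
    have h3 : ‖y‖ ^ (2 * s) = (‖y‖ ^ 2) ^ s := by rw [← pow_mul, mul_comm]
    have h4 : (‖y‖ ^ 2) ^ s ≤ ((n : ℝ) * ‖y j‖ ^ 2) ^ s :=
      pow_le_pow_left₀ (sq_nonneg _) hsum s
    have h5 : ((n : ℝ) * ‖y j‖ ^ 2) ^ s = (n : ℝ) ^ s * (‖y j‖ ^ s) ^ 2 := by
      rw [mul_pow, ← pow_mul, ← pow_mul, mul_comm s 2]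
    have h6 : (‖y j‖ ^ s) ^ 2 ≤ (B * ‖y‖ ^ (s + 1)) ^ 2 :=
      pow_le_pow_left₀ (pow_nonneg (norm_nonneg _) _) (hbound j) 2
    have h7 : (B * ‖y‖ ^ (s + 1)) ^ 2 = B ^ 2 * ‖y‖ ^ (2 * s + 2) := by
      rw [mul_pow, ← pow_mul]; ring_nf
    calc ‖y‖ ^ (2 * s) = (‖y‖ ^ 2) ^ s := h3
      _ ≤ ((n : ℝ) * ‖y j‖ ^ 2) ^ s := h4
      _ = (n : ℝ) ^ s * (‖y j‖ ^ s) ^ 2 := h5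
      _ ≤ (n : ℝ) ^ s * (B * ‖y‖ ^ (s + 1)) ^ 2 :=
          mul_le_mul_of_nonneg_left h6 (pow_nonneg (Nat.cast_nonneg n) _)
      _ = A * ‖y‖ ^ (2 * s + 2) := by rw [hAdef, h7]; ring
  -- conclude y = 0
  have hy0 : ‖y‖ = 0 := by
    by_contra hne
    have hpos : 0 < ‖y‖ := lt_of_le_of_ne (norm_nonneg _) (Ne.symm hne)
    have h8 : ‖y‖ ^ (2 * s + 2) = ‖y‖ ^ (2 * s) * ‖y‖ ^ 2 := by rw [← pow_add]
    have h9 : (1 : ℝ) ≤ A * ‖y‖ ^ 2 := by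
      have h10 : 0 < ‖y‖ ^ (2 * s) := pow_pos hpos _
      have h11 : ‖y‖ ^ (2 * s) * 1 ≤ ‖y‖ ^ (2 * s) * (A * ‖y‖ ^ 2) := by
        calc ‖y‖ ^ (2 * s) * 1 = ‖y‖ ^ (2 * s) := mul_one _
          _ ≤ A * ‖y‖ ^ (2 * s + 2) := hmain
          _ = ‖y‖ ^ (2 * s) * (A * ‖y‖ ^ 2) := by rw [pow_add]; ring
      exact le_of_mul_le_mul_left h11 h10
    have hε1 : ε ≤ 1 := le_trans (min_le_right _ _) (min_le_left _ _)
    have hε2 : ε * (A + 1) ≤ 1 := by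
      have hεA : ε ≤ (A + 1)⁻¹ := le_trans (min_le_right δ _) (min_le_right 1 _)
      calc ε * (A + 1) ≤ (A + 1)⁻¹ * (A + 1) := by
            apply mul_le_mul_of_nonneg_right hεA (by positivity)
        _ = 1 := by field_simp
    have hyε : ‖y‖ ≤ ε := hynorm.le
    have h12 : ‖y‖ ^ 2 ≤ ε := by nlinarith [norm_nonneg y, hynorm, hε1, hε.le]
    have h13 : A * ‖y‖ ^ 2 ≤ A * ε := mul_le_mul_of_nonneg_left h12 hA
    nlinarith [h9, h13, hε2, hε]
  have hy0' : y = 0 := norm_eq_zero.mp hy0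
  rw [hy0', add_zero] at hzy
  exact hzy.symm
end
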